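/- arXiv:2111.12220 — 7 statements merged into one kernel-verified Lean document; each statement's English description precedes it below -/
import Mathlib

section
/- Let ρ, ρ₁, …, ρₙ (n ≥ 2) be d×d density matrices and p₁, …, pₙ real numbers with 0 < pₖ < 1 for each k, ∑ₖ pₖ = 1 and ρ = ∑ₖ pₖ ρₖ. For each k set Gₖ = (1 - pₖ) · C_{l1}((ρ - pₖ ρₖ)/(1 - pₖ)) and Aₖ = |Gₖ - pₖ C_{l1}(ρₖ)|. If the Aₖ are not all zero, then (∑ₖ Aₖ²)/(∑ₖ Aₖ) ≤ C_{l1}(ρ). -/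
open Matrix BigOperators
open scoped ComplexOrder

/-- The l1-norm of coherence: sum of absolute values of all off-diagonal entries. -/
noncomputable def Cl1 {d : ℕ} (ρ : Matrix (Fin d) (Fin d) ℂ) : ℝ :=
  ∑ i, ∑ j, if i ≠ j then ‖ρ i j‖ else 0

/-- A density matrix: positive semidefinite with trace 1. -/
def IsDensityMatrix {d : ℕ} (ρ : Matrix (Fin d) (Fin d) ℂ) : Prop :=
  ρ.PosSemidef ∧ ρ.trace = 1

/-- Rank-one outer product |ψ⟩⟨ψ|. -/
noncomputable def outer {d : ℕ} (ψ : Fin d → ℂ) : Matrix (Fin d) (Fin d) ℂ :=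
  Matrix.of fun i j => ψ i * (starRingEnd ℂ) (ψ j)

/-- ψ is a unit vector in ℂ^d. -/
def IsUnitVec {d : ℕ} (ψ : Fin d → ℂ) : Prop :=
  ∑ i, Complex.normSq (ψ i) = 1

/-- The convex-roof l1-norm of coherence. -/
noncomputable def convexRoofCl1 {d : ℕ} (ρ : Matrix (Fin d) (Fin d) ℂ) : ℝ :=
  sInf { c : ℝ | ∃ (n : ℕ) (p : Fin n → ℝ) (ψ : Fin n → Fin d → ℂ),
    (∀ i, 0 ≤ p i) ∧ (∑ i, p i) = 1 ∧ (∀ i, IsUnitVec (ψ i)) ∧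
    ρ = ∑ i, p i • outer (ψ i) ∧
    c = ∑ i, p i * Cl1 (outer (ψ i)) }

lemma Cl1_nonneg {d : ℕ} (M : Matrix (Fin d) (Fin d) ℂ) : 0 ≤ Cl1 M := by
  apply Finset.sum_nonneg; intro i _
  apply Finset.sum_nonneg; intro j _
  split <;> positivity

lemma Cl1_add_le {d : ℕ} (M N : Matrix (Fin d) (Fin d) ℂ) :
    Cl1 (M + N) ≤ Cl1 M + Cl1 N := by
  unfold Cl1
  rw [← Finset.sum_add_distrib]
  apply Finset.sum_le_sum; intro i _
  rw [← Finset.sum_add_distrib]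
  apply Finset.sum_le_sum; intro j _
  split
  · simpa using norm_add_le (M i j) (N i j)
  · simp

lemma Cl1_smul {d : ℕ} (r : ℝ) (M : Matrix (Fin d) (Fin d) ℂ) :
    Cl1 (r • M) = |r| * Cl1 M := by
  unfold Cl1
  rw [Finset.mul_sum]
  congr 1; ext i
  rw [Finset.mul_sum]
  congr 1; ext j
  split
  · rw [Matrix.smul_apply, Complex.real_smul, norm_mul, Complex.norm_real, Real.norm_eq_abs]
  · simp

lemma Cl1_neg {d : ℕ} (M : Matrix (Fin d) (Fin d) ℂ) : Cl1 (-M) = Cl1 M := by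
  have : -M = (-1 : ℝ) • M := by simp
  rw [this, Cl1_smul]; simp

/-- Theorem 1 (lower bound): if A_k = |G_k - p_k C_{l1}(ρ_k)| are not all zero, then
    (∑ A_k²)/(∑ A_k) ≤ C_{l1}(ρ). -/
theorem cl1_lower_bound {d n : ℕ} (hn : 2 ≤ n)
    (ρ : Matrix (Fin d) (Fin d) ℂ) (ρs : Fin n → Matrix (Fin d) (Fin d) ℂ)
    (p : Fin n → ℝ)
    (hρ : IsDensityMatrix ρ) (hρs : ∀ k, IsDensityMatrix (ρs k))
    (hp : ∀ k, 0 < p k ∧ p k < 1) (hsum : ∑ k, p k = 1)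
    (hmix : ρ = ∑ k, p k • ρs k)
    (G : Fin n → ℝ)
    (hG : ∀ k, G k = (1 - p k) * Cl1 ((1 - p k)⁻¹ • (ρ - p k • ρs k)))
    (A : Fin n → ℝ) (hA : ∀ k, A k = |G k - p k * Cl1 (ρs k)|)
    (hA0 : ∃ k, A k ≠ 0) :
    (∑ k, (A k) ^ 2) / (∑ k, A k) ≤ Cl1 ρ := by
  have hAC : ∀ k, A k ≤ Cl1 ρ := by
    intro k
    have hpk := hp k
    have h1p : (0:ℝ) < 1 - p k := by linarith [hpk.2]
    have hGk : G k = Cl1 (ρ - p k • ρs k) := by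
      rw [hG k, Cl1_smul, abs_of_pos (inv_pos.mpr h1p)]
      field_simp
    have hpr : p k * Cl1 (ρs k) = Cl1 (p k • ρs k) := by
      rw [Cl1_smul, abs_of_pos hpk.1]
    rw [hA k, hGk, hpr, abs_sub_le_iff]
    constructor
    · have := Cl1_add_le ρ (-(p k • ρs k))
      rw [Cl1_neg] at this
      have heq : ρ + -(p k • ρs k) = ρ - p k • ρs k := by abel
      rw [heq] at this
      linarith
    · have := Cl1_add_le ρ (-(ρ - p k • ρs k))
      rw [Cl1_neg] at this
      have heq : ρ + -(ρ - p k • ρs k) = p k • ρs k := by abel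
      rw [heq] at this
      linarith
  have hAnn : ∀ k, 0 ≤ A k := fun k => (hA k).symm ▸ abs_nonneg _
  have hSpos : 0 < ∑ k, A k := by
    obtain ⟨k0, hk0⟩ := hA0
    exact Finset.sum_pos' (fun k _ => hAnn k)
      ⟨k0, Finset.mem_univ _, lt_of_le_of_ne (hAnn k0) (Ne.symm hk0)⟩
  rw [div_le_iff₀ hSpos, mul_comm, Finset.sum_mul]
  apply Finset.sum_le_sum
  intro k _
  rw [sq]
  exact mul_le_mul_of_nonneg_left (hAC k) (hAnn k)
end

section
/- Let ρ, ρ₁, ρ₂ be d×d density matrices and p₁, p₂ ≥ 0 with p₁ + p₂ = 1 and ρ = p₁ρ₁ + p₂ρ₂. Then |p₁ C_{l1}(ρ₁) - p₂ C_{l1}(ρ₂)| ≤ C_{l1}(ρ). -/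
open Matrix BigOperators
open scoped ComplexOrder

/-- Lemma 1: |p₁ C_{l1}(ρ₁) - p₂ C_{l1}(ρ₂)| ≤ C_{l1}(ρ) for ρ = p₁ρ₁ + p₂ρ₂. -/
theorem cl1_two_state_lower_bound {d : ℕ}
    (ρ ρ₁ ρ₂ : Matrix (Fin d) (Fin d) ℂ) (p₁ p₂ : ℝ)
    (hρ : IsDensityMatrix ρ) (hρ₁ : IsDensityMatrix ρ₁) (hρ₂ : IsDensityMatrix ρ₂)
    (hp₁ : 0 ≤ p₁) (hp₂ : 0 ≤ p₂) (hsum : p₁ + p₂ = 1)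
    (hmix : ρ = p₁ • ρ₁ + p₂ • ρ₂) :
    |p₁ * Cl1 ρ₁ - p₂ * Cl1 ρ₂| ≤ Cl1 ρ := by
  have key : p₁ * Cl1 ρ₁ - p₂ * Cl1 ρ₂ =
      ∑ i, ∑ j, (if i ≠ j then p₁ * ‖ρ₁ i j‖ - p₂ * ‖ρ₂ i j‖ else 0) := by
    simp only [Cl1, Finset.mul_sum, ← Finset.sum_sub_distrib, mul_ite, mul_zero]
    congr 1; ext i; congr 1; ext j; split <;> simp
  rw [key]
  have h1 : ∀ i j : Fin d,
      |if i ≠ j then p₁ * ‖ρ₁ i j‖ - p₂ * ‖ρ₂ i j‖ else 0|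
        ≤ if i ≠ j then ‖ρ i j‖ else 0 := by
    intro i j
    split
    · have := abs_norm_sub_norm_le (p₁ • ρ₁ i j) (-(p₂ • ρ₂ i j))
      simp only [norm_neg, sub_neg_eq_add] at this
      calc |p₁ * ‖ρ₁ i j‖ - p₂ * ‖ρ₂ i j‖|
          = |‖p₁ • ρ₁ i j‖ - ‖p₂ • ρ₂ i j‖| := by
            simp [norm_smul, Real.norm_eq_abs,
              abs_of_nonneg hp₁, abs_of_nonneg hp₂]
        _ ≤ ‖p₁ • ρ₁ i j + p₂ • ρ₂ i j‖ := this
        _ = ‖ρ i j‖ := by rw [hmix]; simp [Matrix.add_apply]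
    · simp
  calc |∑ i, ∑ j, (if i ≠ j then p₁ * ‖ρ₁ i j‖ - p₂ * ‖ρ₂ i j‖ else 0)|
      ≤ ∑ i, ∑ j, |if i ≠ j then p₁ * ‖ρ₁ i j‖ - p₂ * ‖ρ₂ i j‖ else 0| := by
        refine (Finset.abs_sum_le_sum_abs _ _).trans ?_
        exact Finset.sum_le_sum fun i _ => Finset.abs_sum_le_sum_abs _ _
    _ ≤ Cl1 ρ := Finset.sum_le_sum fun i _ => Finset.sum_le_sum fun j _ => h1 i j
end

section
/- Let ρ be a 3×3 density matrix of rank 3 whose entries satisfy ρ₁₃ = ρ₃₁ = ρ₂₃ = ρ₃₂ = 0 (so ρ is block diagonal, with an arbitrary 2×2 positive block in the upper-left corner and the entry ρ₃₃ in the lower-right corner). Then C_{l1}(ρ) = C̃_{l1}(ρ). -/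
open Matrix BigOperators
open scoped ComplexOrder

lemma Cl1_le_mix {d n : ℕ} (p : Fin n → ℝ) (ψ : Fin n → Fin d → ℂ) (hp : ∀ i, 0 ≤ p i)
    (ρ : Matrix (Fin d) (Fin d) ℂ) (hd : ρ = ∑ i, p i • outer (ψ i)) :
    Cl1 ρ ≤ ∑ k, p k * Cl1 (outer (ψ k)) := by
  have key : ∀ i j : Fin d, ‖ρ i j‖ ≤ ∑ k, p k * ‖outer (ψ k) i j‖ := by
    intro i j
    have h1 : ρ i j = ∑ k, (p k : ℂ) * outer (ψ k) i j := by
      rw [hd]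
      simp [Matrix.sum_apply, Matrix.smul_apply, Complex.real_smul]
    rw [h1]
    refine (norm_sum_le _ _).trans (le_of_eq ?_)
    refine Finset.sum_congr rfl fun k _ => ?_
    rw [norm_mul, Complex.norm_real, Real.norm_eq_abs, abs_of_nonneg (hp k)]
  calc Cl1 ρ ≤ ∑ i, ∑ j, if i ≠ j then (∑ k, p k * ‖outer (ψ k) i j‖) else 0 := by
        refine Finset.sum_le_sum fun i _ => Finset.sum_le_sum fun j _ => ?_
        split_ifs with h
        · exact key i j
        · exact le_refl 0
    _ = ∑ i, ∑ j, ∑ k, (if i ≠ j then p k * ‖outer (ψ k) i j‖ else 0) := by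
        refine Finset.sum_congr rfl fun i _ => Finset.sum_congr rfl fun j _ => ?_
        split_ifs <;> simp
    _ = ∑ i, ∑ k, ∑ j, (if i ≠ j then p k * ‖outer (ψ k) i j‖ else 0) :=
        Finset.sum_congr rfl fun i _ => Finset.sum_comm
    _ = ∑ k, ∑ i, ∑ j, (if i ≠ j then p k * ‖outer (ψ k) i j‖ else 0) :=
        Finset.sum_comm
    _ = ∑ k, p k * Cl1 (outer (ψ k)) := by
        refine Finset.sum_congr rfl fun k _ => ?_
        unfold Cl1
        rw [Finset.mul_sum]
        refine Finset.sum_congr rfl fun i _ => ?_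
        rw [Finset.mul_sum]
        refine Finset.sum_congr rfl fun j _ => ?_
        split_ifs <;> simp


lemma exists_decomp_reals (a b r : ℝ) (ha : 0 < a) (hb : 0 < b) (hr0 : 0 ≤ r)
    (hdet : r^2 < a*b) :
    ∃ P Q x y : ℝ, 0 ≤ P ∧ 0 ≤ Q ∧ 0 ≤ x ∧ 0 ≤ y ∧ P + Q = a + b ∧
      P * x^2 + Q * y^2 = a ∧ P * y^2 + Q * x^2 = b ∧ (P+Q) * (x*y) = r ∧ x^2 + y^2 = 1 := by
  obtain ⟨s, hs_def⟩ : ∃ s : ℝ, s = a + b := ⟨_, rfl⟩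
  have hs : 0 < s := by rw [hs_def]; positivity
  have hD2 : 0 < s^2 - 4*r^2 := by rw [hs_def]; nlinarith [sq_nonneg (a - b)]
  obtain ⟨D, hD_def⟩ : ∃ D : ℝ, D = Real.sqrt (s^2 - 4*r^2) := ⟨_, rfl⟩
  have hD : 0 < D := hD_def ▸ Real.sqrt_pos.mpr hD2
  have hDsq : D^2 = s^2 - 4*r^2 := hD_def ▸ Real.sq_sqrt hD2.le
  have hDle : D ≤ s := by nlinarith [sq_nonneg r]
  have habs2 : |2*a - s| ≤ D := by
    rw [abs_le]; constructor <;> nlinarith [hs_def, hDsq]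
  obtain ⟨x, hx_def⟩ : ∃ x : ℝ, x = Real.sqrt ((s+D)/(2*s)) := ⟨_, rfl⟩
  obtain ⟨y, hy_def⟩ : ∃ y : ℝ, y = Real.sqrt ((s-D)/(2*s)) := ⟨_, rfl⟩
  have hx0 : 0 ≤ x := hx_def ▸ Real.sqrt_nonneg _
  have hy0 : 0 ≤ y := hy_def ▸ Real.sqrt_nonneg _
  have hx2 : x^2 = (s+D)/(2*s) := hx_def ▸ Real.sq_sqrt (by positivity)
  have hy2 : y^2 = (s-D)/(2*s) := hy_def ▸ Real.sq_sqrt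
    (div_nonneg (by linarith) (by linarith))
  have hxy1 : x^2 + y^2 = 1 := by rw [hx2, hy2]; field_simp; ring
  have hxy : x * y = r / s := by
    have h1 : (x*y)^2 = (r/s)^2 := by
      rw [mul_pow, hx2, hy2, div_mul_div_comm, div_pow,
        show (s+D)*(s-D) = 4*r^2 by nlinarith [hDsq]]
      field_simp
      ring
    have h2 : 0 ≤ r / s := by positivity
    nlinarith [mul_nonneg hx0 hy0]
  obtain ⟨P, hP_def⟩ : ∃ P : ℝ, P = s*(D+(2*a-s))/(2*D) := ⟨_, rfl⟩
  obtain ⟨Q, hQ_def⟩ : ∃ Q : ℝ, Q = s*(D-(2*a-s))/(2*D) := ⟨_, rfl⟩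
  have hP0 : 0 ≤ P := by
    rw [hP_def]
    have := (abs_le.mp habs2).1
    have h1 : 0 ≤ D + (2*a-s) := by linarith
    positivity
  have hQ0 : 0 ≤ Q := by
    rw [hQ_def]
    have := (abs_le.mp habs2).2
    have h1 : 0 ≤ D - (2*a-s) := by linarith
    positivity
  have hPQ : P + Q = s := by rw [hP_def, hQ_def]; field_simp; ring
  have hPa : P * x^2 + Q * y^2 = a := by
    rw [hx2, hy2, hP_def, hQ_def]; field_simp; rw [hs_def]; ring
  have hPb : P * y^2 + Q * x^2 = b := by
    rw [hx2, hy2, hP_def, hQ_def]; field_simp; rw [hs_def]; ring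
  have hPr : (P + Q) * (x*y) = r := by
    rw [hPQ, hxy]; field_simp
  exact ⟨P, Q, x, y, hP0, hQ0, hx0, hy0, hs_def ▸ hPQ, hPa, hPb, hPr, hxy1⟩

/-- Theorem 3: for a rank-3 3×3 density matrix that is block diagonal with a 2×2
    upper-left block and ρ₃₃ in the lower-right corner, C_{l1}(ρ) = C̃_{l1}(ρ). -/
theorem cl1_eq_convexRoofCl1_block_diag (ρ : Matrix (Fin 3) (Fin 3) ℂ)
    (hρ : IsDensityMatrix ρ) (hrank : ρ.rank = 3)
    (h13 : ρ 0 2 = 0) (h31 : ρ 2 0 = 0) (h23 : ρ 1 2 = 0) (h32 : ρ 2 1 = 0) :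
    Cl1 ρ = convexRoofCl1 ρ := by
  obtain ⟨hpsd, htr⟩ := hρ
  have hherm := hpsd.1
  -- positivity of the quadratic form
  have hQf : ∀ x : Fin 3 → ℂ, x ≠ 0 → 0 < star x ⬝ᵥ ρ *ᵥ x := by
    have hinj : Function.Injective ρ.mulVecLin := by
      have htop : LinearMap.range ρ.mulVecLin = ⊤ := by
        apply Submodule.eq_top_of_finrank_eq
        rw [Matrix.rank] at hrank
        rw [hrank]
        simp [Module.finrank_fintype_fun_eq_card]
      exact (LinearMap.injective_iff_surjective).mpr (LinearMap.range_eq_top.mp htop)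
    intro x hx
    refine lt_of_le_of_ne (hpsd.dotProduct_mulVec_nonneg x) (Ne.symm fun h0 => ?_)
    have h1 := (hpsd.dotProduct_mulVec_zero_iff x).mp h0
    exact hx (hinj (by simpa using h1))
  obtain ⟨a, ha_def⟩ : ∃ a : ℝ, a = (ρ 0 0).re := ⟨_, rfl⟩
  obtain ⟨b, hb_def⟩ : ∃ b : ℝ, b = (ρ 1 1).re := ⟨_, rfl⟩
  obtain ⟨c3, hc3_def⟩ : ∃ c3 : ℝ, c3 = (ρ 2 2).re := ⟨_, rfl⟩
  obtain ⟨t, ht_def⟩ : ∃ t : ℂ, t = ρ 0 1 := ⟨_, rfl⟩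
  obtain ⟨r, hr_def⟩ : ∃ r : ℝ, r = ‖t‖ := ⟨_, rfl⟩
  have hr0 : 0 ≤ r := hr_def ▸ norm_nonneg t
  have e00 : ρ 0 0 = (a : ℂ) := ha_def ▸ ((Complex.conj_eq_iff_re.mp (hherm.apply 0 0))).symm
  have e11 : ρ 1 1 = (b : ℂ) := hb_def ▸ ((Complex.conj_eq_iff_re.mp (hherm.apply 1 1))).symm
  have e22 : ρ 2 2 = (c3 : ℂ) := hc3_def ▸ ((Complex.conj_eq_iff_re.mp (hherm.apply 2 2))).symm
  have e10 : ρ 1 0 = (starRingEnd ℂ) t := ht_def ▸ (hherm.apply 1 0).symm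
  have ha : 0 < a := by
    have h := hQf ![1,0,0] (by intro h; have := congrFun h 0; simp at this)
    have hval : star ![(1:ℂ),0,0] ⬝ᵥ ρ *ᵥ ![1,0,0] = (a : ℂ) := by
      simp [dotProduct, Matrix.mulVec, Fin.sum_univ_three, e00]
    rw [hval] at h
    exact_mod_cast h
  have hc3 : 0 < c3 := by
    have h := hQf ![0,0,1] (by intro h; have := congrFun h 2; simp at this)
    have hval : star ![(0:ℂ),0,1] ⬝ᵥ ρ *ᵥ ![0,0,1] = (c3 : ℂ) := by
      simp [dotProduct, Matrix.mulVec, Fin.sum_univ_three, e22]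
    rw [hval] at h
    exact_mod_cast h
  have hdet : r^2 < a * b := by
    have h := hQf ![t, -(a:ℂ), 0] (by
      intro h; have := congrFun h 1; simp at this
      exact ha.ne' (by exact_mod_cast this))
    have hval : star ![t, -(a:ℂ), 0] ⬝ᵥ ρ *ᵥ ![t, -(a:ℂ), 0]
        = ((a * (a*b - r^2) : ℝ) : ℂ) := by
      have hct : (starRingEnd ℂ) t * t = ((‖t‖ : ℂ))^2 := by
        rw [mul_comm, Complex.mul_conj, Complex.normSq_eq_norm_sq]
        push_cast; ring
      simp [dotProduct, Matrix.mulVec, Fin.sum_univ_three, e00, e11, e10, h13, h31, h23,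
        h32, ← ht_def]
      push_cast
      rw [hr_def, hct]
      ring
    rw [hval] at h
    have h2 : 0 < a * (a*b - r^2) := by exact_mod_cast h
    nlinarith
  have hb : 0 < b := by nlinarith
  -- trace
  have htrace : a + b + c3 = 1 := by
    have h : ((a + b + c3 : ℝ) : ℂ) = 1 := by
      rw [← htr]
      simp only [Matrix.trace, Fin.sum_univ_three, Matrix.diag, e00, e11, e22]
      push_cast; ring
    exact_mod_cast h
  obtain ⟨P, Q, x, y, hP0, hQ0, hx0, hy0, hPQ, hPa, hPb, hPr, hxy1⟩ :=
    exists_decomp_reals a b r ha hb hr0 hdet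
  -- the phase
  obtain ⟨u, hu_def⟩ : ∃ u : ℂ, u = if t = 0 then 1 else t / (‖t‖ : ℂ) := ⟨_, rfl⟩
  have habsu : ‖u‖ = 1 := by
    rw [hu_def]; split_ifs with h
    · simp
    · rw [norm_div, Complex.norm_real, norm_norm]
      exact div_self (norm_ne_zero_iff.mpr h)
  have hnormu : Complex.normSq u = 1 := by
    rw [Complex.normSq_eq_norm_sq, habsu]; norm_num
  have hu1 : u * (starRingEnd ℂ) u = 1 := by
    rw [Complex.mul_conj, hnormu]; norm_num
  have hru : (r:ℂ) * u = t := by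
    rw [hr_def, hu_def]; split_ifs with h
    · simp [h]
    · have : (‖t‖ : ℂ) ≠ 0 := by
        exact_mod_cast (norm_ne_zero_iff).mpr h
      field_simp
  -- the decomposition
  obtain ⟨ψ, hψ_def⟩ : ∃ ψ : Fin 3 → Fin 3 → ℂ,
      ψ = ![![(x:ℂ), (y:ℂ) * (starRingEnd ℂ) u, 0],
            ![(y:ℂ), (x:ℂ) * (starRingEnd ℂ) u, 0],
            ![0, 0, 1]] := ⟨_, rfl⟩
  obtain ⟨p, hp_def⟩ : ∃ p : Fin 3 → ℝ, p = ![P, Q, c3] := ⟨_, rfl⟩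
  have hp0 : ∀ i, 0 ≤ p i := by
    rw [hp_def]; intro i; fin_cases i <;> simp [hP0, hQ0, hc3.le]
  have hpsum : ∑ i, p i = 1 := by
    rw [hp_def, Fin.sum_univ_three]
    simp only [Matrix.cons_val_zero, Matrix.cons_val_one, Matrix.head_cons,
      Matrix.cons_val_two, Matrix.tail_cons]
    linarith [htrace, hPQ]
  have hunitvec : ∀ (v w : ℝ), v^2 + w^2 = 1 →
      IsUnitVec ![(v:ℂ), (w:ℂ) * (starRingEnd ℂ) u, 0] := by
    intro v w hvw
    simp only [IsUnitVec, Fin.sum_univ_three, Matrix.cons_val_zero, Matrix.cons_val_one,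
      Matrix.head_cons, Matrix.cons_val_two, Matrix.tail_cons, Complex.normSq_mul,
      Complex.normSq_conj, Complex.normSq_ofReal, hnormu, Complex.normSq_zero,
      Complex.normSq_one, mul_one, add_zero, zero_add]
    linear_combination hvw
  have hunit2 : IsUnitVec ![(0:ℂ), 0, 1] := by
    simp only [IsUnitVec, Fin.sum_univ_three, Matrix.cons_val_zero, Matrix.cons_val_one,
      Matrix.head_cons, Matrix.cons_val_two, Matrix.tail_cons, Complex.normSq_zero,
      Complex.normSq_one, add_zero, zero_add]
  have hunit : ∀ i, IsUnitVec (ψ i) := by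
    rw [hψ_def]; intro i
    fin_cases i
    · exact hunitvec x y hxy1
    · exact hunitvec y x (by linarith [hxy1])
    · exact hunit2
  have hPaC : (P:ℂ) * (x:ℂ)^2 + (Q:ℂ) * (y:ℂ)^2 = (a:ℂ) := by exact_mod_cast hPa
  have hPbC : (P:ℂ) * (y:ℂ)^2 + (Q:ℂ) * (x:ℂ)^2 = (b:ℂ) := by exact_mod_cast hPb
  have hPrC : ((P:ℂ) + (Q:ℂ)) * ((x:ℂ)*(y:ℂ)) = (r:ℂ) := by exact_mod_cast hPr
  have hruc : (r:ℂ) * (starRingEnd ℂ) u = (starRingEnd ℂ) t := by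
    have := congrArg (starRingEnd ℂ) hru
    simpa [Complex.conj_ofReal] using this
  have hdecomp : ρ = ∑ i, p i • outer (ψ i) := by
    rw [hψ_def, hp_def, Fin.sum_univ_three]
    ext i j
    fin_cases i <;> fin_cases j <;>
      simp [outer, Matrix.add_apply, Matrix.smul_apply, Complex.real_smul,
        Complex.conj_ofReal, _root_.map_mul, Complex.conj_conj, h13, h31, h23, h32,
        e00, e11, e22, e10, ← ht_def]
    · linear_combination (-1 : ℂ) * hPaC
    · linear_combination (-1 : ℂ) * hru + (-u) * hPrC
    · linear_combination (-1 : ℂ) * hruc + (-(starRingEnd ℂ) u) * hPrC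
    · linear_combination (-((P:ℂ) * (y:ℂ)^2 + (Q:ℂ) * (x:ℂ)^2)) * hu1 - hPbC
  have hCl1ρ : Cl1 ρ = 2*r := by
    simp [Cl1, Fin.sum_univ_three, h13, h31, h23, h32, e10, ← ht_def, map_zero]
    rw [← hr_def]; ring
  have hCl1sum : (Cl1 ρ) = ∑ i, p i * Cl1 (outer (ψ i)) := by
    rw [hψ_def, hp_def, Fin.sum_univ_three]
    have c1 : Cl1 (outer ![(x:ℂ), (y:ℂ) * (starRingEnd ℂ) u, 0]) = 2*(x*y) := by
      simp [Cl1, outer, Fin.sum_univ_three, _root_.map_mul, Complex.norm_real, Real.norm_eq_abs,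
        abs_of_nonneg hx0, abs_of_nonneg hy0, habsu, Complex.norm_conj, norm_mul]
      ring
    have c2 : Cl1 (outer ![(y:ℂ), (x:ℂ) * (starRingEnd ℂ) u, 0]) = 2*(x*y) := by
      simp [Cl1, outer, Fin.sum_univ_three, _root_.map_mul, Complex.norm_real, Real.norm_eq_abs,
        abs_of_nonneg hx0, abs_of_nonneg hy0, habsu, Complex.norm_conj, norm_mul]
      ring
    have c3' : Cl1 (outer ![(0:ℂ), 0, 1]) = 0 := by
      simp [Cl1, outer, Fin.sum_univ_three]
    simp only [Matrix.cons_val_zero, Matrix.cons_val_one, Matrix.head_cons,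
      Matrix.cons_val_two, Matrix.tail_cons]
    rw [c1, c2, c3', hCl1ρ, ← hPr]
    ring
  -- assemble
  have hmem : Cl1 ρ ∈ { c : ℝ | ∃ (n : ℕ) (p : Fin n → ℝ) (ψ : Fin n → Fin 3 → ℂ),
      (∀ i, 0 ≤ p i) ∧ (∑ i, p i) = 1 ∧ (∀ i, IsUnitVec (ψ i)) ∧
      ρ = ∑ i, p i • outer (ψ i) ∧
      c = ∑ i, p i * Cl1 (outer (ψ i)) } :=
    ⟨3, p, ψ, hp0, hpsum, hunit, hdecomp, hCl1sum⟩
  have hlb : ∀ c ∈ { c : ℝ | ∃ (n : ℕ) (p : Fin n → ℝ) (ψ : Fin n → Fin 3 → ℂ),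
      (∀ i, 0 ≤ p i) ∧ (∑ i, p i) = 1 ∧ (∀ i, IsUnitVec (ψ i)) ∧
      ρ = ∑ i, p i • outer (ψ i) ∧
      c = ∑ i, p i * Cl1 (outer (ψ i)) }, Cl1 ρ ≤ c := by
    rintro c ⟨n, q, φ, hq0, -, -, hdec, rfl⟩
    exact Cl1_le_mix q φ hq0 ρ hdec
  unfold convexRoofCl1
  exact le_antisymm (le_csInf ⟨_, hmem⟩ hlb) (csInf_le ⟨Cl1 ρ, hlb⟩ hmem)
end

section
/- Let ρ be a d×d density matrix which can be written as ρ = ∑_{k=1}^{n} pₖ |ψₖ⟩⟨ψₖ| (n ≥ 2) with unit vectors ψₖ ∈ ℂ^d and pₖ ≥ 0, ∑ₖ pₖ = 1. Let s ≠ t be indices and set B = n(∑ₖ pₖ C_{l1}(|ψₖ⟩⟨ψₖ|) + 1). Then |ρ_{st}|²/B ≤ C̃_{l1}(ρ). -/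
open Matrix BigOperators
open scoped ComplexOrder

lemma abs_entry_le_Cl1 {d : ℕ} (M : Matrix (Fin d) (Fin d) ℂ) {s t : Fin d} (h : s ≠ t) :
    ‖M s t‖ ≤ Cl1 M := by
  unfold Cl1
  have h1 : ‖M s t‖ = if s ≠ t then ‖M s t‖ else 0 := by simp [h]
  rw [h1]
  calc (if s ≠ t then ‖M s t‖ else 0)
      ≤ ∑ j, if s ≠ j then ‖M s j‖ else 0 := by
        apply Finset.single_le_sum (f := fun j => if s ≠ j then ‖M s j‖ else 0)
          (fun j _ => by split <;> positivity) (Finset.mem_univ t)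
    _ ≤ ∑ i, ∑ j, if i ≠ j then ‖M i j‖ else 0 := by
        apply Finset.single_le_sum
          (f := fun i => ∑ j, if i ≠ j then ‖M i j‖ else 0)
          (fun i _ => Finset.sum_nonneg fun j _ => by split <;> positivity)
          (Finset.mem_univ s)

lemma abs_entry_le_decomp {d m : ℕ} (ρ : Matrix (Fin d) (Fin d) ℂ)
    (q : Fin m → ℝ) (φ : Fin m → Fin d → ℂ) (hq : ∀ i, 0 ≤ q i)
    (hmix : ρ = ∑ i, q i • outer (φ i)) {s t : Fin d} (hst : s ≠ t) :
    ‖ρ s t‖ ≤ ∑ i, q i * Cl1 (outer (φ i)) := by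
  have hentry : ρ s t = ∑ i, (q i : ℂ) * (outer (φ i) s t) := by
    rw [hmix]; simp [Matrix.sum_apply, Matrix.smul_apply, Complex.real_smul]
  rw [hentry]
  calc ‖∑ i, (q i : ℂ) * (outer (φ i) s t)‖
      ≤ ∑ i, ‖(q i : ℂ) * (outer (φ i) s t)‖ := by
        exact norm_sum_le _ _
    _ ≤ ∑ i, q i * Cl1 (outer (φ i)) := by
        apply Finset.sum_le_sum; intro i _
        rw [norm_mul, Complex.norm_of_nonneg (hq i)]
        exact mul_le_mul_of_nonneg_left (abs_entry_le_Cl1 _ hst) (hq i)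

/-- Theorem 4 (lower bound): |ρ_{st}|²/B ≤ C̃_{l1}(ρ). -/
theorem convexRoofCl1_lower_bound {d n : ℕ} (hn : 2 ≤ n)
    (ρ : Matrix (Fin d) (Fin d) ℂ) (hρ : IsDensityMatrix ρ)
    (p : Fin n → ℝ) (ψ : Fin n → Fin d → ℂ)
    (hp : ∀ k, 0 ≤ p k) (hsum : ∑ k, p k = 1) (hψ : ∀ k, IsUnitVec (ψ k))
    (hmix : ρ = ∑ k, p k • outer (ψ k))
    (s t : Fin d) (hst : s ≠ t)
    (B : ℝ) (hB : B = (n : ℝ) * ((∑ k, p k * Cl1 (outer (ψ k))) + 1)) :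
    ‖ρ s t‖ ^ 2 / B ≤ convexRoofCl1 ρ := by
  set S := ∑ k, p k * Cl1 (outer (ψ k)) with hS
  have hS0 : 0 ≤ S := Finset.sum_nonneg fun k _ => mul_nonneg (hp k) (Cl1_nonneg _)
  have hBpos : 0 < B := by
    rw [hB]
    have : (2:ℝ) ≤ n := by exact_mod_cast hn
    nlinarith
  have habsS : ‖ρ s t‖ ≤ S := abs_entry_le_decomp ρ p ψ hp hmix hst
  have habsB : ‖ρ s t‖ ≤ B := by
    rw [hB]
    have h2 : (2:ℝ) ≤ n := by exact_mod_cast hn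
    nlinarith
  have hlow : ‖ρ s t‖ ≤ convexRoofCl1 ρ := by
    apply le_csInf
    · exact ⟨S, n, p, ψ, hp, hsum, hψ, hmix, rfl⟩
    · rintro c ⟨m, q, φ, hq, hqs, hφ, hm, rfl⟩
      exact abs_entry_le_decomp ρ q φ hq hm hst
  have key : ‖ρ s t‖ ^ 2 ≤ ‖ρ s t‖ * B := by
    rw [pow_two]
    exact mul_le_mul_of_nonneg_left habsB (norm_nonneg _)
  calc ‖ρ s t‖ ^ 2 / B ≤ ‖ρ s t‖ * B / B :=
        div_le_div_of_nonneg_right key hBpos.le |>.trans_eq rfl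
    _ = ‖ρ s t‖ := mul_div_cancel_right₀ _ hBpos.ne'
    _ ≤ convexRoofCl1 ρ := hlow
end

section
/- For every d-dimensional density matrix ρ (d ≥ 1), C_{l1}(ρ) ≤ d - 1. -/
open Matrix BigOperators
open scoped ComplexOrder

lemma key2 {M : Matrix (Fin 2) (Fin 2) ℂ} (h : M.PosSemidef) :
    2 * ‖M 0 1‖ ≤ (M 0 0).re + (M 1 1).re := by
  by_cases hz : M 0 1 = 0
  · simp [hz]
    have h0 := h.dotProduct_mulVec_nonneg (Pi.single 0 1)
    have h1 := h.dotProduct_mulVec_nonneg (Pi.single 1 1)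
    rw [Complex.le_def] at h0 h1
    simp [dotProduct, Matrix.mulVec, Fin.sum_univ_two, Pi.single_apply] at h0 h1
    linarith [h0.1, h1.1]
  · set c : ℂ := -(starRingEnd ℂ (M 0 1)) / (‖M 0 1‖ : ℂ) with hc
    have hx := h.dotProduct_mulVec_nonneg ![1, c]
    rw [Complex.le_def] at hx
    have hherm : M 1 0 = starRingEnd ℂ (M 0 1) := by
      have := congrFun (congrFun h.1 1) 0
      simpa [Matrix.conjTranspose_apply] using this.symm
    have habs : (‖M 0 1‖ : ℂ) ≠ 0 := by
      simpa using hz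
    have hcomp : star ![1, c] ⬝ᵥ M *ᵥ ![1, c]
        = M 0 0 + M 1 1 - 2 * ‖M 0 1‖ := by
      simp [dotProduct, Matrix.mulVec, Fin.sum_univ_two, hc, hherm]
      have hmc : M 0 1 * (starRingEnd ℂ) (M 0 1) = ((‖M 0 1‖):ℂ)^2 := by
        rw [Complex.mul_conj, Complex.normSq_eq_norm_sq]; push_cast; ring
      field_simp
      linear_combination (-2*(‖M 0 1‖:ℂ) + M 1 1) * hmc
    rw [hcomp] at hx
    have := hx.1
    simp [Complex.add_re, Complex.sub_re, Complex.mul_re, Complex.ofReal_re, Complex.ofReal_im] at this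
    linarith

lemma keyd {d : ℕ} {ρ : Matrix (Fin d) (Fin d) ℂ} (h : ρ.PosSemidef) (i j : Fin d) :
    2 * ‖ρ i j‖ ≤ (ρ i i).re + (ρ j j).re := by
  have h2 := key2 (h.submatrix ![i, j])
  simpa using h2

/-- Lemma 6: for any d-dimensional density matrix, C_{l1}(ρ) ≤ d - 1. -/
theorem cl1_le_dim_sub_one {d : ℕ} (hd : 1 ≤ d)
    (ρ : Matrix (Fin d) (Fin d) ℂ) (hρ : IsDensityMatrix ρ) :
    Cl1 ρ ≤ (d : ℝ) - 1 := by
  unfold Cl1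
  obtain ⟨hpsd, htr⟩ := hρ
  set a : Fin d → ℝ := fun i => (ρ i i).re with ha
  have hS : ∑ i, a i = 1 := by
    have := congrArg Complex.re htr
    simpa [Matrix.trace, Matrix.diag, Complex.re_sum] using this
  have h1 : (∑ i, ∑ j, if i ≠ j then ‖ρ i j‖ else 0)
      ≤ ∑ i, ∑ j, (if i ≠ j then (a i + a j)/2 else 0) := by
    refine Finset.sum_le_sum fun i _ => Finset.sum_le_sum fun j _ => ?_
    by_cases h : i = j
    · simp [h]
    · simp only [h, ne_eq, not_false_eq_true, if_true]
      have := keyd hpsd i j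
      simp only [ha]
      linarith
  have h2 : ∑ i, ∑ j, (if i ≠ j then (a i + a j)/2 else 0) = (d:ℝ) - 1 := by
    have hrw : ∀ i j : Fin d, (if i ≠ j then (a i + a j)/2 else 0)
        = (a i + a j)/2 - (if j = i then (a i + a j)/2 else 0) := by
      intro i j; by_cases h : i = j <;> simp [h, eq_comm]
    simp_rw [hrw, Finset.sum_sub_distrib, Finset.sum_ite_eq', Finset.mem_univ, if_true]
    have : ∀ i : Fin d, ∑ j, (a i + a j)/2 = ((d:ℝ) * a i + 1)/2 := by
      intro i
      rw [← Finset.sum_div, Finset.sum_add_distrib, hS, Finset.sum_const, Finset.card_univ]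
      simp [nsmul_eq_mul]
    simp_rw [this]
    rw [← Finset.sum_div, ← Finset.sum_div, Finset.sum_add_distrib, Finset.sum_add_distrib,
      ← Finset.mul_sum, hS, Finset.sum_const, Finset.card_univ, nsmul_eq_mul, Fintype.card_fin]
    push_cast
    ring
  linarith
end

section
/- Let ρ be a d-dimensional density matrix and suppose exactly r of its diagonal entries are zero (necessarily 0 ≤ r ≤ d - 1). Then C_{l1}(ρ) ≤ d - r - 1. -/
open Matrix BigOperators
open scoped ComplexOrder

lemma two_ite_sum' {d:ℕ} {i j : Fin d} (hij : i ≠ j) (p q : Fin d → ℂ) :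
    ∑ a, (if a = i then p a else if a = j then q a else 0) = p i + q j := by
  have h : ∀ a : Fin d, (if a = i then p a else if a = j then q a else 0)
      = (if a = i then p a else 0) + (if a = j then q a else 0) := by
    intro a; split_ifs with h1 h2 <;> simp_all
  simp [h, Finset.sum_add_distrib, Finset.sum_ite_eq']

lemma quad_form_eval {d:ℕ} (ρ : Matrix (Fin d) (Fin d) ℂ) {i j : Fin d} (c : ℂ) (hij : i ≠ j) :
    star (fun k => if k = i then c else if k = j then 1 else 0 : Fin d → ℂ) ⬝ᵥ
      ρ *ᵥ (fun k => if k = i then c else if k = j then 1 else 0)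
      = (starRingEnd ℂ) c * (ρ i i * c + ρ i j) + (ρ j i * c + ρ j j) := by
  simp only [dotProduct, mulVec, Pi.star_apply, mul_ite, ite_mul, one_mul, zero_mul,
    mul_zero, mul_one]
  simp only [two_ite_sum' hij]
  have h : ∀ a : Fin d,
      (star (if a = i then c else if a = j then 1 else 0)) * (ρ a i * c + ρ a j)
      = (if a = i then star c * (ρ i i * c + ρ i j) else if a = j then (ρ j i * c + ρ j j) else 0) := by
    intro a; split_ifs with h1 h2 <;> simp_all
  calc ∑ a, (star (if a = i then c else if a = j then 1 else 0)) * (ρ a i * c + ρ a j)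
      = ∑ a, (if a = i then star c * (ρ i i * c + ρ i j) else if a = j then (ρ j i * c + ρ j j) else 0) :=
        Finset.sum_congr rfl fun a _ => h a
    _ = _ := two_ite_sum' hij _ _

lemma diag_re_nonneg {d:ℕ} {ρ : Matrix (Fin d) (Fin d) ℂ} (hρ : ρ.PosSemidef) (i : Fin d) :
    0 ≤ (ρ i i).re := by
  have h := hρ.re_dotProduct_nonneg (Pi.single i 1)
  have he : star (Pi.single i (1:ℂ)) ⬝ᵥ ρ *ᵥ Pi.single i 1 = ρ i i := by
    simp [dotProduct, mulVec, Pi.single_apply, Finset.sum_ite_eq', Finset.mul_sum]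
  rwa [he] at h

lemma apply_eq_zero_of_diag {d:ℕ} {ρ : Matrix (Fin d) (Fin d) ℂ} (hρ : ρ.PosSemidef)
    {i : Fin d} (hi : ρ i i = 0) (j : Fin d) : ρ i j = 0 := by
  have he : star (Pi.single i (1:ℂ)) ⬝ᵥ ρ *ᵥ Pi.single i 1 = ρ i i := by
    simp [dotProduct, mulVec, Pi.single_apply, Finset.sum_ite_eq', Finset.mul_sum]
  have h0 : ρ *ᵥ Pi.single i 1 = 0 := (hρ.dotProduct_mulVec_zero_iff _).mp (by rw [he, hi])
  have hji : ρ j i = 0 := by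
    have := congrFun h0 j
    simpa [mulVec, dotProduct, Pi.single_apply, Finset.sum_ite_eq'] using this
  have : ρ i j = star (ρ j i) := (Matrix.IsHermitian.apply hρ.isHermitian i j).symm
  simp [this, hji]

lemma key_ineq {d:ℕ} {ρ : Matrix (Fin d) (Fin d) ℂ} (hρ : ρ.PosSemidef)
    {i j : Fin d} (hij : i ≠ j) :
    2 * ‖ρ i j‖ ≤ (ρ i i).re + (ρ j j).re := by
  by_cases h0 : ρ i j = 0
  · simp [h0]
    exact add_nonneg (diag_re_nonneg hρ i) (diag_re_nonneg hρ j)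
  · set t : ℝ := ‖ρ i j‖ with ht
    have htpos : 0 < t := norm_pos_iff.mpr h0
    set c : ℂ := -(ρ i j) / (t : ℂ) with hc
    have h := hρ.re_dotProduct_nonneg (fun k => if k = i then c else if k = j then 1 else 0)
    rw [quad_form_eval ρ c hij] at h
    have hji : ρ j i = star (ρ i j) := (Matrix.IsHermitian.apply hρ.isHermitian j i).symm
    have hcc : (starRingEnd ℂ) (ρ i j) * ρ i j = ((t:ℂ))^2 := by
      rw [← Complex.normSq_eq_conj_mul_self, ht]
      norm_cast
      rw [Complex.sq_norm]
    have heval : (starRingEnd ℂ) c * (ρ i i * c + ρ i j) + (ρ j i * c + ρ j j)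
        = ρ i i + ρ j j - 2 * (t:ℂ) := by
      rw [hc, hji]
      have htne : (t:ℂ) ≠ 0 := by exact_mod_cast htpos.ne'
      change _ * (_ + _) + ((starRingEnd ℂ) (ρ i j) * _ + _) = _
      simp only [map_neg, map_div₀, Complex.conj_ofReal]
      linear_combination (norm := skip) (ρ i i / (t:ℂ)^2 - 2 / (t:ℂ)) * hcc
      field_simp
      ring
    rw [heval] at h
    simp only [RCLike.re_to_complex, Complex.sub_re, Complex.add_re, Complex.mul_re,
      Complex.ofReal_re, Complex.ofReal_im] at h
    simp at h ⊢
    linarith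

lemma apply_eq_zero_of_diag' {d:ℕ} {ρ : Matrix (Fin d) (Fin d) ℂ} (hρ : ρ.PosSemidef)
    {j : Fin d} (hj : ρ j j = 0) (i : Fin d) : ρ i j = 0 := by
  have h1 : ρ j i = 0 := apply_eq_zero_of_diag hρ hj i
  have : ρ i j = star (ρ j i) := (Matrix.IsHermitian.apply hρ.isHermitian i j).symm
  simp [this, h1]

/-- Theorem 6: if exactly r diagonal entries of ρ vanish, then C_{l1}(ρ) ≤ d - r - 1. -/
theorem cl1_le_of_zero_diagonal {d r : ℕ}
    (ρ : Matrix (Fin d) (Fin d) ℂ) (hρ : IsDensityMatrix ρ)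
    (hr : (Finset.univ.filter fun i : Fin d => ρ i i = 0).card = r) :
    Cl1 ρ ≤ (d : ℝ) - r - 1 := by
  obtain ⟨hpsd, htr⟩ := hρ
  set a : Fin d → ℝ := fun i => (ρ i i).re with ha
  have hanon : ∀ i, 0 ≤ a i := fun i => diag_re_nonneg hpsd i
  set S : Finset (Fin d) := Finset.univ.filter (fun i => ρ i i ≠ 0) with hS
  set s : ℕ := S.card with hs
  have hcard : r + s = d := by
    have h2 := Finset.card_filter_add_card_filter_not (s := (Finset.univ : Finset (Fin d)))
      (p := fun i : Fin d => ρ i i = 0)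
    simp only [Finset.card_univ, Fintype.card_fin] at h2
    rw [← hr, hs]
    exact h2
  have hsum1 : ∑ i, a i = 1 := by
    have h1 : (∑ i, ρ i i) = 1 := by simpa [Matrix.trace, Matrix.diag] using htr
    have := congrArg Complex.re h1
    simpa [Complex.re_sum] using this
  have hT : ∑ i ∈ S, a i = 1 := by
    rw [← hsum1]
    refine Finset.sum_subset S.subset_univ (fun x _ hx => ?_)
    simp only [hS, Finset.mem_filter, Finset.mem_univ, true_and, not_not] at hx
    simp [ha, hx]
  set g : Fin d → Fin d → ℝ := fun i j => if i ∈ S ∧ j ∈ S ∧ i ≠ j then (a i + a j)/2 else 0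
    with hg
  have hgn : ∀ i j, 0 ≤ g i j := by
    intro i j
    simp only [hg]
    split_ifs with hm
    · have := hanon i; have := hanon j; linarith
    · exact le_rfl
  have hstep : Cl1 ρ ≤ ∑ i, ∑ j, g i j := by
    refine Finset.sum_le_sum (fun i _ => Finset.sum_le_sum (fun j _ => ?_))
    by_cases hij : i = j
    · simp [hij, hg, hgn]
    · rw [if_pos hij]
      by_cases hi : ρ i i = 0
      · rw [apply_eq_zero_of_diag hpsd hi j, norm_zero]; exact hgn i j
      by_cases hj : ρ j j = 0
      · rw [apply_eq_zero_of_diag' hpsd hj i, norm_zero]; exact hgn i j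
      have hmem : i ∈ S ∧ j ∈ S ∧ i ≠ j := by simp [hS, hi, hj, hij]
      have hk := key_ineq hpsd (hij : i ≠ j)
      simp only [hg, if_pos hmem, ha]
      linarith
  have hinner : ∀ i ∈ S, ∑ j, g i j = ((s:ℝ) - 1) * a i / 2 + (1 - a i)/2 := by
    intro i hi
    have h1 : ∑ j, g i j = ∑ j ∈ S.erase i, (a i + a j)/2 := by
      rw [← Finset.sum_subset ((S.erase i).subset_univ)]
      · refine Finset.sum_congr rfl (fun j hj => ?_)
        simp only [Finset.mem_erase] at hj
        simp [hg, hi, hj.2, (Ne.symm hj.1)]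
      · intro j _ hj
        simp only [Finset.mem_erase, not_and] at hj
        simp only [hg]
        rw [if_neg]
        rintro ⟨hiS, hjS, hij⟩
        exact hj (Ne.symm hij) hjS
    have hce : (S.erase i).card = s - 1 := by rw [Finset.card_erase_of_mem hi, hs]
    have hs1 : 1 ≤ s := Finset.card_pos.mpr ⟨i, hi⟩
    have hsa : ∑ j ∈ S.erase i, a j = 1 - a i := by
      have := Finset.sum_erase_add S a hi
      rw [hT] at this; linarith
    have h2 : ∑ j ∈ S.erase i, (a i + a j)/2
        = (∑ _j ∈ S.erase i, (a i/2)) + ∑ j ∈ S.erase i, (a j/2) := by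
      rw [← Finset.sum_add_distrib]
      exact Finset.sum_congr rfl (fun j _ => by ring)
    have hcast : ((s - 1 : ℕ) : ℝ) = (s:ℝ) - 1 := by
      rw [Nat.cast_sub hs1]; norm_num
    rw [h1, h2, Finset.sum_const, hce, ← Finset.sum_div, hsa, nsmul_eq_mul, hcast]
    ring
  have houter : ∑ i, ∑ j, g i j = (s:ℝ) - 1 := by
    have h1 : ∑ i, ∑ j, g i j = ∑ i ∈ S, ∑ j, g i j := by
      rw [← Finset.sum_subset S.subset_univ]
      intro i _ hi
      apply Finset.sum_eq_zero
      intro j _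
      simp [hg, hi]
    rw [h1, Finset.sum_congr rfl hinner]
    rw [Finset.sum_add_distrib]
    simp only [← Finset.sum_div, ← Finset.mul_sum, mul_div_assoc]
    rw [Finset.sum_sub_distrib, hT, Finset.sum_const, nsmul_eq_mul, mul_one]
    ring
  have hd : (d:ℝ) = (r:ℝ) + (s:ℝ) := by exact_mod_cast hcard.symm
  calc Cl1 ρ ≤ ∑ i, ∑ j, g i j := hstep
    _ = (s:ℝ) - 1 := houter
    _ ≤ (d:ℝ) - r - 1 := by linarith
end

section
/- Let ρ be a d-dimensional density matrix with d ≥ 2, and suppose there exist indices i ≠ j with ρ_{ij} = 0. Set μ = tr(ρ²) - ∑_{k=1}^{d} ρ_{kk}² (equivalently, μ = ∑ₖ λₖ² - ∑ₖ ρ_{kk}², where λ₁, …, λ_d are the eigenvalues of ρ). Then C_{l1}(ρ) ≤ √([d(d-1) - 1] · μ). -/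
open Matrix BigOperators Finset
open scoped ComplexOrder

/-- Theorem 8 (first inequality): if some off-diagonal entry of ρ vanishes, then
    C_{l1}(ρ) ≤ √([d(d-1) - 1]·μ) with μ = tr(ρ²) - ∑_k ρ_{kk}². -/
theorem cl1_le_sqrt_bound {d : ℕ} (hd : 2 ≤ d)
    (ρ : Matrix (Fin d) (Fin d) ℂ) (hρ : IsDensityMatrix ρ)
    (i j : Fin d) (hij : i ≠ j) (h0 : ρ i j = 0)
    (μ : ℝ) (hμ : μ = (Matrix.trace (ρ * ρ)).re - ∑ k, ((ρ k k).re) ^ 2) :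
    Cl1 ρ ≤ Real.sqrt (((d : ℝ) * ((d : ℝ) - 1) - 1) * μ) := by
  unfold Cl1
  obtain ⟨hpsd, -⟩ := hρ
  have hherm : ρ.IsHermitian := hpsd.1
  
  set A : Finset (Fin d × Fin d) := (univ : Finset (Fin d)).offDiag with hA
  set f : Fin d × Fin d → ℝ := fun p => ‖ρ p.1 p.2‖ with hf
  have hconj : ∀ a b : Fin d, ρ b a = (starRingEnd ℂ) (ρ a b) := by
    intro a b
    have := congrFun (congrFun hherm.symm b) a
    simpa [Matrix.conjTranspose_apply] using this
  -- μ = ∑ over offdiag of |ρ_pq|²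
  have hmu : μ = ∑ p ∈ A, f p ^ 2 := by
    have htr : (Matrix.trace (ρ * ρ)).re = ∑ a, ∑ b, Complex.normSq (ρ a b) := by
      rw [Matrix.trace]
      simp only [Matrix.diag_apply, Matrix.mul_apply, Complex.re_sum]
      congr 1; ext a; congr 1; ext b
      rw [hconj a b]
      simp [Complex.normSq_apply, Complex.mul_re]
    have hdiag : ∀ k : Fin d, ((ρ k k).re) ^ 2 = Complex.normSq (ρ k k) := by
      intro k
      have him : (ρ k k).im = 0 := by
        have := congrArg Complex.im (hconj k k)
        simp [Complex.conj_im] at this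
        linarith
      simp [Complex.normSq_apply, him, sq]
    have hsq : ∀ p : Fin d × Fin d, f p ^ 2 = Complex.normSq (ρ p.1 p.2) := by
      intro p; rw [hf]; simp [← Complex.sq_norm]
    rw [hμ, htr]
    simp only [hdiag, hsq]
    rw [← Finset.sum_product']
    rw [hA, show (univ : Finset (Fin d)).offDiag = (univ ×ˢ univ).filter (fun p => p.1 ≠ p.2) by ext p; simp,
      Finset.sum_filter]
    rw [show (∑ k, Complex.normSq (ρ k k)) = ∑ p ∈ (univ ×ˢ univ : Finset (Fin d × Fin d)), if p.1 = p.2 then Complex.normSq (ρ p.1 p.2) else 0 by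
      rw [Finset.sum_product]
      simp]
    rw [← Finset.sum_sub_distrib]
    congr 1; ext p
    by_cases h : p.1 = p.2 <;> simp [h]
  have hcl : (∑ i, ∑ j, if i ≠ j then ‖ρ i j‖ else 0) = ∑ p ∈ A, f p := by
    rw [hA, show (univ : Finset (Fin d)).offDiag = (univ ×ˢ univ).filter (fun p => p.1 ≠ p.2) by ext p; simp,
      Finset.sum_filter, ← Finset.sum_product']
  set S : Finset (Fin d × Fin d) := A.erase (i, j) with hS
  have hmem : (i, j) ∈ A := by simp [hA, Finset.mem_offDiag, hij]
  have hcardS : S.card = d * d - d - 1 := by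
    rw [hS, Finset.card_erase_of_mem hmem]; simp [hA, Finset.offDiag_card]
  have hsumS : ∑ p ∈ A, f p = ∑ p ∈ S, f p := by
    rw [hS]
    exact (Finset.sum_erase _ (by simp [hf, h0])).symm
  have hCS : (∑ p ∈ S, f p) ^ 2 ≤ (S.card : ℝ) * ∑ p ∈ S, f p ^ 2 := by
    have := sq_sum_le_card_mul_sum_sq (s := S) (f := f)
    exact_mod_cast this
  have hsub : ∑ p ∈ S, f p ^ 2 ≤ μ := by
    rw [hmu]
    exact Finset.sum_le_sum_of_subset_of_nonneg (Finset.erase_subset _ _) (by intros; positivity)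
  have hcardle : (S.card : ℝ) ≤ (d : ℝ) * ((d : ℝ) - 1) - 1 := by
    rw [hcardS]
    have h1 : d ≤ d * d := Nat.le_mul_of_pos_left d (by omega)
    have h2 : 1 ≤ d * d - d := by
      have : d * 2 ≤ d * d := Nat.mul_le_mul_left d hd
      omega
    push_cast [Nat.cast_sub h1, Nat.cast_sub h2]
    nlinarith [Nat.one_le_two_pow (n := 0)]
  have hμnn : 0 ≤ ∑ p ∈ S, f p ^ 2 := Finset.sum_nonneg (by intros; positivity)
  rw [hcl, hsumS]
  apply Real.le_sqrt_of_sq_le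
  calc (∑ p ∈ S, f p) ^ 2 ≤ (S.card : ℝ) * ∑ p ∈ S, f p ^ 2 := hCS
    _ ≤ ((d : ℝ) * ((d : ℝ) - 1) - 1) * μ := mul_le_mul hcardle hsub hμnn (by nlinarith [(by exact_mod_cast hd : (2:ℝ) ≤ d)])
end
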